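/- Let λ > 0, σ > 0, let Z be a standard Gaussian random variable, and let V be an exponentially distributed random variable with rate λ independent of Z. Then X = σ√V · Z has a Laplace distribution: its law has density f(x) = (√(2λ)/(2σ)) exp(−√(2λ)|x|/σ) with respect to Lebesgue measure. -/

import Mathlib

open MeasureTheory ProbabilityTheory Real Set
open scoped ENNReal NNReal

section Aux


lemma glasser_integrable {a b : ℝ} (ha : 0 < a) (hb : 0 ≤ b) :
    IntegrableOn (fun z : ℝ => Real.exp (-(a * z^2 + b / z^2))) (Ioi 0) := by
  have hmeas : Measurable (fun z : ℝ => Real.exp (-(a * z^2 + b / z^2))) := by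
    measurability
  refine Integrable.mono (integrable_exp_neg_mul_sq ha).integrableOn
    hmeas.aestronglyMeasurable.restrict ?_
  filter_upwards [ae_restrict_mem measurableSet_Ioi] with z hz
  rw [norm_of_nonneg (exp_pos _).le, norm_of_nonneg (exp_pos _).le]
  apply exp_le_exp.2
  have : 0 ≤ b / z^2 := div_nonneg hb (sq_nonneg z)
  nlinarith

lemma glasser {a b : ℝ} (ha : 0 < a) (hb : 0 ≤ b) :
    ∫ z in Ioi (0:ℝ), Real.exp (-(a * z^2 + b / z^2))
      = Real.sqrt (π / a) / 2 * Real.exp (-2 * Real.sqrt (a * b)) := by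
  rcases eq_or_lt_of_le hb with hb0 | hb
  · simp only [← hb0, zero_div, add_zero, mul_zero, sqrt_zero, mul_zero, neg_zero, exp_zero,
      mul_one]
    simpa [neg_mul] using integral_gaussian_Ioi a
  -- now 0 < b
  set k : ℝ := Real.sqrt (b / a) with hk
  have hkpos : 0 < k := Real.sqrt_pos.2 (div_pos hb ha)
  have hk2 : k ^ 2 = b / a := Real.sq_sqrt (div_pos hb ha).le
  have hak2 : a * k ^ 2 = b := by rw [hk2]; field_simp
  have hbk2 : b / k ^ 2 = a := by rw [hk2]; field_simp
  have hak : a * k = Real.sqrt (a * b) := by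
    rw [hk, ← Real.sqrt_sq ha.le, ← Real.sqrt_mul (sq_nonneg a)]
    congr 1
    field_simp
    ring_nf; rw [Real.sq_sqrt (sq_nonneg a)]
  -- step (i): substitution z ↦ k / z
  have himg1 : (fun z : ℝ => k / z) '' Ioi 0 = Ioi 0 := by
    ext y
    constructor
    · rintro ⟨z, hz, rfl⟩
      exact div_pos hkpos hz
    · intro hy
      exact ⟨k / y, div_pos hkpos hy, by field_simp⟩
  have hderiv1 : ∀ z ∈ Ioi (0:ℝ), HasDerivWithinAt (fun z : ℝ => k / z) (-(k / z^2)) (Ioi 0) z := by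
    intro z hz
    have h := ((hasDerivAt_inv (ne_of_gt hz)).const_mul k).hasDerivWithinAt (s := Ioi 0)
    have heq : (fun z : ℝ => k / z) = fun z : ℝ => k * z⁻¹ := by
      ext w; rw [div_eq_mul_inv]
    rw [heq]
    exact h.congr_deriv (by ring)
  have hinj1 : InjOn (fun z : ℝ => k / z) (Ioi 0) := by
    intro z1 h1 z2 h2 h
    have h1' : z1 ≠ 0 := ne_of_gt h1
    have h2' : z2 ≠ 0 := ne_of_gt h2
    field_simp at h
    have hk0 : k ≠ 0 := ne_of_gt hkpos
    tauto
  have hI1 : ∫ z in Ioi (0:ℝ), Real.exp (-(a * z^2 + b / z^2))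
      = ∫ z in Ioi (0:ℝ), (k / z^2) * Real.exp (-(a * z^2 + b / z^2)) := by
    conv_lhs => rw [← himg1]
    rw [integral_image_eq_integral_abs_deriv_smul measurableSet_Ioi hderiv1 hinj1]
    refine setIntegral_congr_fun measurableSet_Ioi fun z hz => ?_
    have hz0 : (z:ℝ) ≠ 0 := ne_of_gt hz
    have h1 : a * (k/z)^2 + b / (k/z)^2 = a * z^2 + b / z^2 := by
      rw [← hak2]
      have hk0 : k ≠ 0 := ne_of_gt hkpos
      field_simp
      ring
    rw [smul_eq_mul, abs_of_nonpos (neg_nonpos.2 (by positivity)), neg_neg]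
    simp only [h1]
  -- integrability of J's integrand
  have hJint : IntegrableOn (fun z : ℝ => (k / z^2) * Real.exp (-(a * z^2 + b / z^2))) (Ioi 0) := by
    have := (integrableOn_image_iff_integrableOn_abs_deriv_smul measurableSet_Ioi hderiv1 hinj1
      (fun z : ℝ => Real.exp (-(a * z^2 + b / z^2)))).1 (by rw [himg1]; exact glasser_integrable ha hb.le)
    refine (IntegrableOn.congr_fun this ?_ measurableSet_Ioi)
    intro z hz
    have hz0 : (z:ℝ) ≠ 0 := ne_of_gt hz
    have h1 : a * (k/z)^2 + b / (k/z)^2 = a * z^2 + b / z^2 := by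
      rw [← hak2]
      have hk0 : k ≠ 0 := ne_of_gt hkpos
      field_simp
      ring
    simp only [smul_eq_mul, h1]
    rw [abs_of_nonpos (neg_nonpos.2 (by positivity)), neg_neg]
  -- step (ii): substitution z ↦ z - k / z
  have hderiv2 : ∀ z ∈ Ioi (0:ℝ),
      HasDerivWithinAt (fun z : ℝ => z - k / z) (1 + k / z^2) (Ioi 0) z := by
    intro z hz
    have hz0 : (z:ℝ) ≠ 0 := ne_of_gt hz
    have h := ((hasDerivAt_id z).sub ((hasDerivAt_inv hz0).const_mul k)).hasDerivWithinAt
      (s := Ioi 0)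
    have heq : (fun z : ℝ => z - k / z) = fun z : ℝ => id z - k * z⁻¹ := by
      ext w; rw [div_eq_mul_inv]; rfl
    rw [heq]
    exact h.congr_deriv (by ring)
  have hinj2 : InjOn (fun z : ℝ => z - k / z) (Ioi 0) := by
    intro z1 h1 z2 h2 h
    have h1' : (z1:ℝ) ≠ 0 := ne_of_gt h1
    have h2' : (z2:ℝ) ≠ 0 := ne_of_gt h2
    simp only at h
    have key : (z1 - z2) * (z1 * z2 + k) = 0 := by
      field_simp at h
      nlinarith [h]
    rcases mul_eq_zero.1 key with h' | h'
    · linarith [sub_eq_zero.1 h']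
    · nlinarith [mul_pos (mem_Ioi.1 h1) (mem_Ioi.1 h2)]
  have himg2 : (fun z : ℝ => z - k / z) '' Ioi 0 = univ := by
    refine eq_univ_of_forall fun u => ?_
    set s : ℝ := Real.sqrt (u^2 + 4*k) with hs
    have hs2 : s^2 = u^2 + 4*k := Real.sq_sqrt (by positivity)
    have hsu : |u| < s := by
      rw [hs, ← Real.sqrt_sq_eq_abs]
      exact Real.sqrt_lt_sqrt (sq_nonneg u) (by nlinarith)
    have hz : 0 < (u + s)/2 := by
      have := neg_abs_le u
      linarith [neg_lt_of_abs_lt hsu]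
    refine ⟨(u + s)/2, hz, ?_⟩
    have hz0 : (u + s)/2 ≠ 0 := ne_of_gt hz
    have hquad : ((u + s)/2)^2 - u * ((u + s)/2) - k = 0 := by
      field_simp
      nlinarith [hs2]
    have hkeq : k = ((u + s)/2)^2 - u * ((u + s)/2) := by linarith [hquad]
    have hfac : ((u + s)/2)^2 - u * ((u + s)/2) = ((u + s)/2 - u) * ((u + s)/2) := by ring
    simp only
    rw [hkeq, hfac, mul_div_cancel_right₀ _ hz0]
    ring
  have hgauss : ∫ u, Real.exp (-(a * u^2)) = Real.sqrt (π / a) := by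
    simpa [neg_mul] using integral_gaussian a
  have key2 : Real.sqrt (π / a)
      = Real.exp (2 * Real.sqrt (a * b)) * (2 * ∫ z in Ioi (0:ℝ), Real.exp (-(a * z^2 + b / z^2))) := by
    rw [← hgauss, ← setIntegral_univ, ← himg2,
      integral_image_eq_integral_abs_deriv_smul measurableSet_Ioi hderiv2 hinj2]
    have hcongr : ∀ z ∈ Ioi (0:ℝ), |1 + k / z^2| • Real.exp (-(a * ((fun z => z - k/z) z)^2))
        = Real.exp (2 * Real.sqrt (a * b)) *
          (Real.exp (-(a * z^2 + b / z^2)) + (k / z^2) * Real.exp (-(a * z^2 + b / z^2))) := by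
      intro z hz
      have hz0 : (z:ℝ) ≠ 0 := ne_of_gt hz
      have habs : |1 + k / z^2| = 1 + k / z^2 := abs_of_pos (by positivity)
      have hexp : -(a * (z - k/z)^2) = 2 * Real.sqrt (a*b) + -(a * z^2 + b / z^2) := by
        rw [← hak, ← hak2]
        field_simp
        ring
      rw [smul_eq_mul, habs]
      simp only [hexp, Real.exp_add]
      ring
    rw [setIntegral_congr_fun measurableSet_Ioi hcongr]
    rw [MeasureTheory.integral_const_mul, integral_add (glasser_integrable ha hb.le) hJint, ← hI1]
    ring
  have hepos : (0:ℝ) < Real.exp (2 * Real.sqrt (a * b)) := Real.exp_pos _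
  rw [show (-2:ℝ) * Real.sqrt (a*b) = -(2 * Real.sqrt (a*b)) by ring, Real.exp_neg]
  rw [key2]
  field_simp

lemma laplace_density_eq (lam σ : ℝ) (hlam : 0 < lam) (hσ : 0 < σ) (x : ℝ) :
    ∫⁻ v, exponentialPDF lam v *
        ENNReal.ofReal ((Real.sqrt (2*π*(σ^2*v)))⁻¹ * Real.exp (-x^2/(2*(σ^2*v))))
      = ENNReal.ofReal (Real.sqrt (2*lam) / (2*σ) * Real.exp (-(Real.sqrt (2*lam) * |x|) / σ)) := by
  set b : ℝ := x^2/(2*σ^2) with hbdef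
  have hb : 0 ≤ b := by positivity
  set h : ℝ → ℝ := fun v =>
    lam * Real.exp (-(lam*v)) * ((Real.sqrt (2*π*(σ^2*v)))⁻¹ * Real.exp (-x^2/(2*(σ^2*v)))) with hh
  have hgnonneg : ∀ v : ℝ, 0 ≤ (Real.sqrt (2*π*(σ^2*v)))⁻¹ * Real.exp (-x^2/(2*(σ^2*v))) := by
    intro v
    positivity
  -- substitution w ↦ w^2
  have himg3 : (fun w : ℝ => w^2) '' Ioi 0 = Ioi 0 := by
    ext y
    constructor
    · rintro ⟨w, hw, rfl⟩
      exact pow_pos (mem_Ioi.1 hw) 2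
    · intro hy
      exact ⟨Real.sqrt y, Real.sqrt_pos.2 hy, Real.sq_sqrt hy.le⟩
  have hderiv3 : ∀ w ∈ Ioi (0:ℝ), HasDerivWithinAt (fun w : ℝ => w^2) (2*w) (Ioi 0) w := by
    intro w hw
    simpa [mul_comm] using (hasDerivAt_pow 2 w).hasDerivWithinAt (s := Ioi 0)
  have hinj3 : InjOn (fun w : ℝ => w^2) (Ioi 0) := by
    intro w1 h1 w2 h2 h
    simp only at h
    nlinarith [(mem_Ioi.1 h1).le, (mem_Ioi.1 h2).le]
  have hptw : ∀ w ∈ Ioi (0:ℝ), |2*w| • h (w^2)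
      = (2*lam/(Real.sqrt (2*π)*σ)) * Real.exp (-(lam*w^2 + b/w^2)) := by
    intro w hw
    have hw0 : (0:ℝ) < w := hw
    have hsq : Real.sqrt (2*π*(σ^2*w^2)) = Real.sqrt (2*π) * (σ*w) := by
      rw [show 2*π*(σ^2*w^2) = (2*π) * (σ*w)^2 by ring, Real.sqrt_mul (by positivity),
        Real.sqrt_sq (by positivity)]
    have hexp2 : -x^2/(2*(σ^2*w^2)) = -(b/w^2) := by
      rw [hbdef]
      field_simp
    have hexp3 : -(lam*w^2) + -(b/w^2) = -(lam*w^2 + b/w^2) := by ring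
    rw [smul_eq_mul, abs_of_pos (by positivity), hh]
    simp only [hsq, hexp2]
    rw [show Real.exp (-(lam*w^2 + b/w^2)) = Real.exp (-(lam*w^2)) * Real.exp (-(b/w^2)) by
      rw [← Real.exp_add]; ring_nf]
    field_simp
  have hint_w : IntegrableOn (fun w : ℝ =>
      (2*lam/(Real.sqrt (2*π)*σ)) * Real.exp (-(lam*w^2 + b/w^2))) (Ioi 0) :=
    (glasser_integrable hlam hb).const_mul _
  have hint : IntegrableOn h (Ioi 0) := by
    rw [← himg3]
    rw [integrableOn_image_iff_integrableOn_abs_deriv_smul measurableSet_Ioi hderiv3 hinj3]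
    exact (hint_w.congr_fun (fun w hw => (hptw w hw).symm) measurableSet_Ioi)
  have hIoi : ∫ v in Ioi (0:ℝ), h v
      = Real.sqrt (2*lam)/(2*σ) * Real.exp (-(Real.sqrt (2*lam) * |x|) / σ) := by
    conv_lhs => rw [← himg3]
    rw [integral_image_eq_integral_abs_deriv_smul measurableSet_Ioi hderiv3 hinj3,
      setIntegral_congr_fun measurableSet_Ioi hptw, MeasureTheory.integral_const_mul,
      glasser hlam hb]
    -- algebra
    have hexp4 : -2 * Real.sqrt (lam * b) = -(Real.sqrt (2*lam) * |x|) / σ := by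
      have h1 : lam * b = (Real.sqrt (2*lam) * |x| / (2*σ))^2 := by
        rw [div_pow, mul_pow, Real.sq_sqrt (by positivity), sq_abs, hbdef]
        field_simp
      rw [h1, Real.sqrt_sq (by positivity)]
      field_simp
    rw [hexp4]
    have hconst : 2*lam/(Real.sqrt (2*π)*σ) * (Real.sqrt (π/lam)/2) = Real.sqrt (2*lam)/(2*σ) := by
      have hA : lam * Real.sqrt (π/lam) = Real.sqrt (lam*π) := by
        conv_lhs => rw [← Real.sqrt_sq hlam.le]
        rw [← Real.sqrt_mul (by positivity)]
        congr 1
        field_simp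
        ring_nf; rw [Real.sqrt_sq hlam.le]
      have hB : Real.sqrt (2*π) * Real.sqrt (2*lam) = 2 * Real.sqrt (lam*π) := by
        rw [← Real.sqrt_mul (by positivity),
          show (2*π)*(2*lam) = 2^2*(lam*π) by ring, Real.sqrt_mul (by norm_num),
          Real.sqrt_sq (by norm_num)]
      have hsqrt2pi : 0 < Real.sqrt (2*π) := Real.sqrt_pos.2 (by positivity)
      have hstep : 2*lam/(Real.sqrt (2*π)*σ) * (Real.sqrt (π/lam)/2)
          = lam * Real.sqrt (π/lam) / (Real.sqrt (2*π)*σ) := by ring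
      rw [hstep, hA, div_eq_div_iff (by positivity) (by positivity)]
      linear_combination (-σ) * hB
    linear_combination Real.exp (-(Real.sqrt (2*lam) * |x|) / σ) * hconst
  -- assemble
  have hnonneg : ∀ v : ℝ, 0 ≤ h v := fun v =>
    mul_nonneg (mul_nonneg hlam.le (Real.exp_pos _).le) (hgnonneg v)
  have hpt : ∀ v : ℝ, exponentialPDF lam v *
      ENNReal.ofReal ((Real.sqrt (2*π*(σ^2*v)))⁻¹ * Real.exp (-x^2/(2*(σ^2*v))))
      = ENNReal.ofReal (Set.indicator (Ici 0) h v) := by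
    intro v
    rcases lt_or_ge v 0 with hv | hv
    · rw [exponentialPDF_of_neg hv, zero_mul,
        Set.indicator_of_notMem (by simpa using hv), ENNReal.ofReal_zero]
    · rw [exponentialPDF_of_nonneg hv, Set.indicator_of_mem (mem_Ici.2 hv), hh,
        ← ENNReal.ofReal_mul (by positivity)]
  have hint' : Integrable (Set.indicator (Ici 0) h) :=
    (integrable_indicator_iff measurableSet_Ici).2 ((integrableOn_Ici_iff_integrableOn_Ioi (f := h) (b := 0)).2 hint)
  calc ∫⁻ v, exponentialPDF lam v *
        ENNReal.ofReal ((Real.sqrt (2*π*(σ^2*v)))⁻¹ * Real.exp (-x^2/(2*(σ^2*v))))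
      = ∫⁻ v, ENNReal.ofReal (Set.indicator (Ici 0) h v) := lintegral_congr hpt
    _ = ENNReal.ofReal (∫ v, Set.indicator (Ici 0) h v) :=
        (ofReal_integral_eq_lintegral_ofReal hint'
          (ae_of_all _ fun v => Set.indicator_nonneg (fun w _ => hnonneg w) v)).symm
    _ = ENNReal.ofReal (∫ v in Ioi (0:ℝ), h v) := by
        rw [integral_indicator measurableSet_Ici, integral_Ici_eq_integral_Ioi]
    _ = _ := by rw [hIoi]

end Aux

/-- If `V` is exponential with rate `λ` and `Z` an independent standard
Gaussian, then `X = σ√V ⬝ Z` is Laplace distributed with density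
`x ↦ (√(2λ)/(2σ)) exp(-√(2λ)|x|/σ)`. -/
theorem sqrtExp_mul_gaussian_laplace
    {Ω : Type*} [MeasurableSpace Ω] (P : Measure Ω) [IsProbabilityMeasure P]
    (lam σ : ℝ) (hlam : 0 < lam) (hσ : 0 < σ)
    (V Z : Ω → ℝ) (hVm : Measurable V) (hZm : Measurable Z)
    (hV : Measure.map V P = expMeasure lam)
    (hZ : Measure.map Z P = gaussianReal 0 1)
    (hindep : IndepFun V Z P) :
    Measure.map (fun ω => σ * Real.sqrt (V ω) * Z ω) P
      = volume.withDensity (fun x => ENNReal.ofReal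
          (Real.sqrt (2 * lam) / (2 * σ) * Real.exp (-(Real.sqrt (2 * lam) * |x|) / σ))) := by
  have hexpP : IsProbabilityMeasure (expMeasure lam) := isProbabilityMeasure_expMeasure hlam
  -- joint law
  have hpair : Measure.map (fun ω => (V ω, Z ω)) P
      = (expMeasure lam).prod (gaussianReal 0 1) := by
    rw [← hV, ← hZ]
    exact (indepFun_iff_map_prod_eq_prod_map_map hVm.aemeasurable hZm.aemeasurable).1 hindep
  have hgm : Measurable (fun p : ℝ × ℝ => σ * Real.sqrt p.1 * p.2) := by
    exact ((measurable_const.mul (measurable_fst.sqrt)).mul measurable_snd)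
  have hcomp : Measure.map (fun ω => σ * Real.sqrt (V ω) * Z ω) P
      = Measure.map (fun p : ℝ × ℝ => σ * Real.sqrt p.1 * p.2)
          ((expMeasure lam).prod (gaussianReal 0 1)) := by
    rw [← hpair, Measure.map_map hgm (hVm.prodMk hZm)]
    rfl
  rw [hcomp]
  -- density function of the scaled gaussian, as an explicit function
  set D : ℝ → ℝ → ℝ≥0∞ := fun v x => ENNReal.ofReal
    ((Real.sqrt (2*π*(σ^2*v)))⁻¹ * Real.exp (-x^2/(2*(σ^2*v)))) with hD
  have hDm : Measurable (fun p : ℝ × ℝ => D p.1 p.2) := by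
    apply Measurable.ennreal_ofReal
    apply Measurable.mul
    · exact ((measurable_const.mul (measurable_const.mul measurable_fst)).sqrt).inv
    · exact (((measurable_snd.pow_const 2).neg).div
        (measurable_const.mul (measurable_const.mul measurable_fst))).exp
  have hexpPDFm : Measurable (exponentialPDF lam) :=
    (measurable_exponentialPDFReal lam).ennreal_ofReal
  have hexp_def : expMeasure lam = volume.withDensity (exponentialPDF lam) := rfl
  have hIic0 : expMeasure lam (Iic 0) = 0 := by
    rw [hexp_def, withDensity_apply _ measurableSet_Iic,
      lintegral_exponentialPDF_eq_antiDeriv hlam 0]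
    simp
  refine Measure.ext fun s hs => ?_
  rw [Measure.map_apply hgm hs, Measure.prod_apply (hgm hs), withDensity_apply _ hs]
  -- for each v, the slice measure
  have hslice : ∀ v : ℝ, gaussianReal 0 1
      (Prod.mk v ⁻¹' ((fun p : ℝ×ℝ => σ * Real.sqrt p.1 * p.2) ⁻¹' s))
      = gaussianReal 0 (⟨(σ * Real.sqrt v)^2, sq_nonneg _⟩ * 1) s := by
    intro v
    have h1 : (Prod.mk v ⁻¹' ((fun p : ℝ×ℝ => σ * Real.sqrt p.1 * p.2) ⁻¹' s))
        = (fun z => (σ * Real.sqrt v) * z) ⁻¹' s := rfl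
    rw [h1, ← Measure.map_apply (measurable_const_mul _) hs,
      gaussianReal_map_const_mul (σ * Real.sqrt v)]
    rw [mul_zero]; rfl
  simp only [hslice]
  -- replace by explicit density a.e.
  have hae : ∀ᵐ v ∂(expMeasure lam),
      gaussianReal 0 (⟨(σ * Real.sqrt v)^2, sq_nonneg _⟩ * 1) s = ∫⁻ x in s, D v x := by
    rw [ae_iff]
    refine measure_mono_null (fun v hv => ?_) hIic0
    simp only [mem_setOf_eq] at hv
    by_contra hv'
    apply hv
    have hvpos : 0 < v := lt_of_not_ge (fun h => hv' (mem_Iic.2 h))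
    have hvar : ((⟨(σ * Real.sqrt v)^2, sq_nonneg _⟩ * 1 : ℝ≥0) : ℝ) = σ^2 * v := by
      push_cast
      show ((σ * Real.sqrt v)^2 * 1 : ℝ) = σ^2 * v
      rw [mul_one, mul_pow, Real.sq_sqrt hvpos.le]
    have hvne : (⟨(σ * Real.sqrt v)^2, sq_nonneg _⟩ * 1 : ℝ≥0) ≠ 0 := by
      intro h
      have h2 : ((⟨(σ * Real.sqrt v)^2, sq_nonneg _⟩ * 1 : ℝ≥0) : ℝ) = 0 := by rw [h]; simp
      rw [hvar] at h2
      have : 0 < σ^2 * v := by positivity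
      linarith
    rw [gaussianReal_apply _ hvne]
    refine setLIntegral_congr_fun hs (fun x _ => ?_)
    rw [hD]
    simp only [gaussianPDF, gaussianPDFReal, hvar, sub_zero]
  rw [lintegral_congr_ae hae, hexp_def,
    lintegral_withDensity_eq_lintegral_mul_non_measurable _ hexpPDFm
      (ae_of_all _ fun v => ENNReal.ofReal_lt_top)]
  have hmul : ∀ v : ℝ, exponentialPDF lam v * ∫⁻ x in s, D v x
      = ∫⁻ x in s, exponentialPDF lam v * D v x := fun v =>
    (lintegral_const_mul' _ _ ENNReal.ofReal_ne_top).symm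
  simp only [Pi.mul_apply]
  rw [lintegral_congr hmul, lintegral_lintegral_swap]
  · refine setLIntegral_congr_fun hs (fun x _ => ?_)
    exact laplace_density_eq lam σ hlam hσ x
  · exact (hexpPDFm.comp measurable_fst).mul
      (hDm.comp (measurable_fst.prodMk measurable_snd)) |>.aemeasurable
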